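/- For α, β ∈ ℝ with μ = 1 + e^{iβ} + (1 − e^{iβ})e^{iα} ≠ 0 and ν = 1 + e^{−iβ} + (1 − e^{−iβ})e^{iα} ≠ 0, define φ_{0,0} = (1/√2)((μ/|μ|)e₁ + e₄), φ_{0,1} = (1/√2)(−(μ/|μ|)e₁ + e₄), φ_{1,0} = (1/√2)((ν/|ν|)e₂ + e₃), φ_{1,1} = (1/√2)(−(ν/|ν|)e₂ + e₃) in ℂ⁴, where e₁,…,e₄ is the standard basis. Let C = σ_0 ⊗ I₂, where σ_0 is the 2×2 matrix with zero diagonal and both off-diagonal entries equal to 1, and I₂ is the 2×2 identity. Then for all t, t', s, s' ∈ {0,1}: ⟨φ_{t,s}, C φ_{t,s'}⟩ = 0, and consequently |⟨φ_{t,s}, C φ_{t',s'}⟩| ≤ 1 with |⟨φ_{t,s}, C φ_{t',s'}⟩| = 0 whenever t' = t; i.e., |⟨φ_{t,s}, C φ_{t',s'}⟩| ≤ δ_{t+1 mod 2}^{t'}. -/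

import Mathlib

open Matrix Kronecker

private lemma crossL1 (a b : ℂ) :
    ∑ i : Fin 2 × Fin 2, (starRingEnd ℂ) (((1 / (Real.sqrt 2 : ℂ)) •
      (a • (Pi.single ((0 : Fin 2), (1 : Fin 2)) 1 : (Fin 2 × Fin 2) → ℂ) +
        (Pi.single ((1 : Fin 2), (0 : Fin 2)) 1 : (Fin 2 × Fin 2) → ℂ))) i) *
      (((!![0, 1; 1, 0] : Matrix (Fin 2) (Fin 2) ℂ) ⊗ₖ
        (1 : Matrix (Fin 2) (Fin 2) ℂ)).mulVec ((1 / (Real.sqrt 2 : ℂ)) •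
      (b • (Pi.single ((0 : Fin 2), (0 : Fin 2)) 1 : (Fin 2 × Fin 2) → ℂ) +
        (Pi.single ((1 : Fin 2), (1 : Fin 2)) 1 : (Fin 2 × Fin 2) → ℂ)))) i
      = ((starRingEnd ℂ) a + b) / 2 := by
  have hs : (Real.sqrt 2 : ℂ) ≠ 0 := by
    simp [Complex.ofReal_ne_zero, Real.sqrt_ne_zero']
  simp [Matrix.mulVec, dotProduct, Fintype.sum_prod_type, Fin.sum_univ_two,
    Matrix.kroneckerMap_apply, Matrix.one_apply, Pi.single_apply, map_div₀]
  field_simp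
  ring_nf
  first
    | trivial
    | (rw [← Complex.ofReal_pow, Real.sq_sqrt (by norm_num : (0:ℝ) ≤ 2)]; norm_num)

private lemma crossL2 (a b : ℂ) :
    ∑ i : Fin 2 × Fin 2, (starRingEnd ℂ) (((1 / (Real.sqrt 2 : ℂ)) •
      (b • (Pi.single ((0 : Fin 2), (0 : Fin 2)) 1 : (Fin 2 × Fin 2) → ℂ) +
        (Pi.single ((1 : Fin 2), (1 : Fin 2)) 1 : (Fin 2 × Fin 2) → ℂ))) i) *
      (((!![0, 1; 1, 0] : Matrix (Fin 2) (Fin 2) ℂ) ⊗ₖ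
        (1 : Matrix (Fin 2) (Fin 2) ℂ)).mulVec ((1 / (Real.sqrt 2 : ℂ)) •
      (a • (Pi.single ((0 : Fin 2), (1 : Fin 2)) 1 : (Fin 2 × Fin 2) → ℂ) +
        (Pi.single ((1 : Fin 2), (0 : Fin 2)) 1 : (Fin 2 × Fin 2) → ℂ)))) i
      = ((starRingEnd ℂ) b + a) / 2 := by
  have hs : (Real.sqrt 2 : ℂ) ≠ 0 := by
    simp [Complex.ofReal_ne_zero, Real.sqrt_ne_zero']
  simp [Matrix.mulVec, dotProduct, Fintype.sum_prod_type, Fin.sum_univ_two,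
    Matrix.kroneckerMap_apply, Matrix.one_apply, Pi.single_apply, map_div₀]
  field_simp
  ring_nf
  first
    | trivial
    | (rw [← Complex.ofReal_pow, Real.sq_sqrt (by norm_num : (0:ℝ) ≤ 2)]; norm_num)

private lemma absHalf (a b : ℂ) (ha : ‖a‖ = 1) (hb : ‖b‖ = 1) :
    ‖((starRingEnd ℂ) a + b) / 2‖ ≤ 1 := by
  rw [norm_div, Complex.norm_two]
  have h := norm_add_le ((starRingEnd ℂ) a) b
  rw [Complex.norm_conj] at h
  linarith


/-- For the CHSH eigenvectors `φ_{t,s}` and `C = σ₀ ⊗ I₂`,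
`⟨φ_{t,s}, C φ_{t,s'}⟩ = 0` and `|⟨φ_{t,s}, C φ_{t',s'}⟩| ≤ δ_{t+1 mod 2}^{t'}`. -/
theorem stmt_11 (α β : ℝ) (μ ν : ℂ)
    (hμ : μ = 1 + Complex.exp (Complex.I * β) +
      (1 - Complex.exp (Complex.I * β)) * Complex.exp (Complex.I * α))
    (hν : ν = 1 + Complex.exp (-(Complex.I * β)) +
      (1 - Complex.exp (-(Complex.I * β))) * Complex.exp (Complex.I * α))
    (hμ0 : μ ≠ 0) (hν0 : ν ≠ 0)
    (φ : Bool → Bool → (Fin 2 × Fin 2) → ℂ)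
    (hφ00 : φ false false = (1 / (Real.sqrt 2 : ℂ)) •
      ((μ / (‖μ‖ : ℂ)) •
          (Pi.single ((0 : Fin 2), (0 : Fin 2)) 1 : (Fin 2 × Fin 2) → ℂ) +
        (Pi.single ((1 : Fin 2), (1 : Fin 2)) 1 : (Fin 2 × Fin 2) → ℂ)))
    (hφ01 : φ false true = (1 / (Real.sqrt 2 : ℂ)) •
      (-((μ / (‖μ‖ : ℂ)) •
          (Pi.single ((0 : Fin 2), (0 : Fin 2)) 1 : (Fin 2 × Fin 2) → ℂ)) +
        (Pi.single ((1 : Fin 2), (1 : Fin 2)) 1 : (Fin 2 × Fin 2) → ℂ)))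
    (hφ10 : φ true false = (1 / (Real.sqrt 2 : ℂ)) •
      ((ν / (‖ν‖ : ℂ)) •
          (Pi.single ((0 : Fin 2), (1 : Fin 2)) 1 : (Fin 2 × Fin 2) → ℂ) +
        (Pi.single ((1 : Fin 2), (0 : Fin 2)) 1 : (Fin 2 × Fin 2) → ℂ)))
    (hφ11 : φ true true = (1 / (Real.sqrt 2 : ℂ)) •
      (-((ν / (‖ν‖ : ℂ)) •
          (Pi.single ((0 : Fin 2), (1 : Fin 2)) 1 : (Fin 2 × Fin 2) → ℂ)) +
        (Pi.single ((1 : Fin 2), (0 : Fin 2)) 1 : (Fin 2 × Fin 2) → ℂ)))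
    (C : Matrix (Fin 2 × Fin 2) (Fin 2 × Fin 2) ℂ)
    (hC : C = (!![0, 1; 1, 0] : Matrix (Fin 2) (Fin 2) ℂ) ⊗ₖ
      (1 : Matrix (Fin 2) (Fin 2) ℂ)) :
    (∀ t s s' : Bool,
      ∑ i : Fin 2 × Fin 2, (starRingEnd ℂ) (φ t s i) * C.mulVec (φ t s') i = 0) ∧
    (∀ t t' s s' : Bool,
      ‖∑ i : Fin 2 × Fin 2,
          (starRingEnd ℂ) (φ t s i) * C.mulVec (φ t' s') i‖
        ≤ if t' = !t then 1 else 0) := by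
  have habsμ : ‖μ / (‖μ‖ : ℂ)‖ = 1 := by
    rw [norm_div, Complex.norm_real, Real.norm_eq_abs, abs_of_nonneg (norm_nonneg μ),
      div_self (norm_ne_zero_iff.mpr hμ0)]
  have habsν : ‖ν / (‖ν‖ : ℂ)‖ = 1 := by
    rw [norm_div, Complex.norm_real, Real.norm_eq_abs, abs_of_nonneg (norm_nonneg ν),
      div_self (norm_ne_zero_iff.mpr hν0)]
  rw [← neg_smul] at hφ01 hφ11
  have h1 : ∀ t s s' : Bool,
      ∑ i : Fin 2 × Fin 2, (starRingEnd ℂ) (φ t s i) * C.mulVec (φ t s') i = 0 := by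
    intro t s s'
    cases t <;> cases s <;> cases s' <;>
      simp only [hφ00, hφ01, hφ10, hφ11, hC] <;>
      simp [Matrix.mulVec, dotProduct, Fintype.sum_prod_type, Fin.sum_univ_two,
        Matrix.kroneckerMap_apply, Matrix.one_apply, Pi.single_apply]
  refine ⟨h1, ?_⟩
  intro t t' s s'
  cases t <;> cases t'
  · simp [h1 false s s']
  · -- t = false, t' = true : φ left is μ-type, right is ν-type (crossL2)
    cases s <;> cases s' <;>
      simp only [hφ00, hφ01, hφ10, hφ11, hC, Bool.not_false, if_pos rfl, crossL2] <;>
      first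
        | exact absHalf _ _ (by simpa using habsν) (by simpa using habsμ)
        | exact absHalf _ _ (by simpa using habsμ) (by simpa using habsν)
  · -- t = true, t' = false : crossL1
    cases s <;> cases s' <;>
      simp only [hφ00, hφ01, hφ10, hφ11, hC, Bool.not_true, if_pos rfl, crossL1] <;>
      first
        | exact absHalf _ _ (by simpa using habsν) (by simpa using habsμ)
        | exact absHalf _ _ (by simpa using habsμ) (by simpa using habsν)
  · simp [h1 true s s']
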